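/- arXiv:0809.2280 — 3 statements merged into one kernel-verified Lean document; each statement's English description precedes it below -/
import Mathlib

section
/- Gluing lemma: let U_0,…,U_4 and U'_0,…,U'_4 be vectors in ℝ⁴ with ∑_{i=0}^4 U_i = 0 and ∑_{i=0}^4 U'_i = 0, any four of each set linearly independent, such that U'_0/|U'_0| = ε̃ U_0/|U_0| for a sign ε̃ and εV(U_0 ∧ U_i) = ε'V'(U'_0 ∧ U'_i) for i = 1,…,4, where 1/V = det(U_1,…,U_4), 1/V' = det(U'_1,…,U'_4) and ε, ε' signs. Then ε = ε', there is a sign α with V U_0 = α V' U'_0, and U'_i = α U_i + a_i U_0 for coefficients a_i with ∑_i a_i = α(1 − V/V'). -/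
open Matrix Complex Finset

noncomputable def σ : Fin 3 → Matrix (Fin 2) (Fin 2) ℂ
  | 0 => !![0, 1; 1, 0]
  | 1 => !![0, -Complex.I; Complex.I, 0]
  | 2 => !![1, 0; 0, -1]

noncomputable def su2vec (v : Fin 3 → ℝ) : Matrix (Fin 2) (Fin 2) ℂ :=
  ∑ i, (v i : ℂ) • σ i

noncomputable def levi {n m : ℕ} (x : Fin n → Fin m) : ℝ :=
  ∏ p ∈ Finset.univ.filter (fun p : Fin n × Fin n => p.1 < p.2),
    ((((x p.2 : ℕ) : ℤ) - ((x p.1 : ℕ) : ℤ)).sign : ℝ)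

noncomputable def eps3 (i j k : Fin 3) : ℝ := levi ![i, j, k]
noncomputable def eps4 (i j k l : Fin 4) : ℝ := levi ![i, j, k, l]
noncomputable def eps5 (i j k l m : Fin 5) : ℝ := levi ![i, j, k, l, m]

noncomputable def det4 (a b c d : Fin 4 → ℝ) : ℝ := Matrix.det (Matrix.of fun I r => ![a, b, c, d] r I)

noncomputable def tstar (a b c : Fin 4 → ℝ) (I : Fin 4) : ℝ :=
  ∑ J, ∑ K, ∑ L, eps4 I J K L * a J * b K * c L

noncomputable def hodge (X : Matrix (Fin 4) (Fin 4) ℝ) : Matrix (Fin 4) (Fin 4) ℝ :=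
  Matrix.of fun I J => (1 / 2) * ∑ K, ∑ L, eps4 I J K L * X K L

noncomputable def sdPart (X : Matrix (Fin 4) (Fin 4) ℝ) (i : Fin 3) : ℝ :=
  (1 / 2) * (∑ j, ∑ k, eps3 i j k * X j.succ k.succ) + X 0 i.succ

noncomputable def asdPart (X : Matrix (Fin 4) (Fin 4) ℝ) (i : Fin 3) : ℝ :=
  (1 / 2) * (∑ j, ∑ k, eps3 i j k * X j.succ k.succ) - X 0 i.succ

noncomputable def wedgeV (a b : Fin 4 → ℝ) : Matrix (Fin 4) (Fin 4) ℝ :=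
  Matrix.of fun I J => a I * b J - a J * b I

set_option maxRecDepth 10000 in
lemma detlem (u1 u2 u3 u4 : Fin 4 → ℝ) (l m1 m2 m3 m4 : ℝ) :
    det4 (fun I => l*u1 I + m1 * (-(u1 I + u2 I + u3 I + u4 I)))
         (fun I => l*u2 I + m2 * (-(u1 I + u2 I + u3 I + u4 I)))
         (fun I => l*u3 I + m3 * (-(u1 I + u2 I + u3 I + u4 I)))
         (fun I => l*u4 I + m4 * (-(u1 I + u2 I + u3 I + u4 I))) =
    l^3 * (l - (m1+m2+m3+m4)) * det4 u1 u2 u3 u4 := by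
  simp only [det4, Matrix.det_succ_row_zero, Fin.sum_univ_succ, Matrix.det_fin_zero,
    Matrix.submatrix_apply, Matrix.of_apply, Matrix.cons_val', Matrix.cons_val_zero,
    Matrix.cons_val_one, Matrix.head_cons, Matrix.head_fin_const, Matrix.cons_val_fin_one,
    Matrix.empty_val', Fin.succAbove_zero, Matrix.cons_val_succ, Fin.val_zero, Fin.val_succ,
    Finset.univ_eq_empty, Finset.sum_empty, Fin.succ_zero_eq_one, Fin.succ_one_eq_two]
  norm_num [Fin.succAbove, Fin.lt_def, Fin.castSucc, Fin.castAdd, Fin.castLE]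
  simp only [show (Fin.succ (2 : Fin 3)) = 3 from rfl, show (Fin.succ (1 : Fin 3)) = 2 from rfl, Matrix.cons_val]
  ring

/-- the gluing lemma relating the tetrads of two 4-simplices sharing a
tetrahedron. -/
theorem stmt17 (U U' : Fin 5 → Fin 4 → ℝ)
    (hclose : ∑ i, U i = 0) (hclose' : ∑ i, U' i = 0)
    (hnd : ∀ i : Fin 5, LinearIndependent ℝ (fun j : {j : Fin 5 // j ≠ i} => U j.1))
    (hnd' : ∀ i : Fin 5, LinearIndependent ℝ (fun j : {j : Fin 5 // j ≠ i} => U' j.1))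
    (e e' et V V' : ℝ)
    (he : e = 1 ∨ e = -1) (he' : e' = 1 ∨ e' = -1) (het : et = 1 ∨ et = -1)
    (hV : V⁻¹ = det4 (U 1) (U 2) (U 3) (U 4)) (hVne : V ≠ 0)
    (hV' : V'⁻¹ = det4 (U' 1) (U' 2) (U' 3) (U' 4)) (hV'ne : V' ≠ 0)
    (hmatch : ∀ I, (Real.sqrt (∑ J, U' 0 J ^ 2))⁻¹ * U' 0 I =
      et * ((Real.sqrt (∑ J, U 0 J ^ 2))⁻¹ * U 0 I))
    (hbiv : ∀ i, i ≠ (0 : Fin 5) → ∀ I J,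
      e * V * (U 0 I * U i J - U 0 J * U i I) =
        e' * V' * (U' 0 I * U' i J - U' 0 J * U' i I)) :
    e = e' ∧
      ∃ α : ℝ, (α = 1 ∨ α = -1) ∧
        (∀ I, V * U 0 I = α * (V' * U' 0 I)) ∧
        ∃ a : Fin 5 → ℝ,
          (∀ i, i ≠ (0 : Fin 5) → U' i = α • U i + a i • U 0) ∧
          (∑ i ∈ Finset.univ \ {(0 : Fin 5)}, a i) = α * (1 - V / V') := by
  have hene : e ≠ 0 := by rcases he with h | h <;> rw [h] <;> norm_num
  have he'ne : e' ≠ 0 := by rcases he' with h | h <;> rw [h] <;> norm_num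
  have hetne : et ≠ 0 := by rcases het with h | h <;> rw [h] <;> norm_num
  have hU0 : U 0 ≠ 0 := by
    have := (hnd 1).ne_zero ⟨0, by decide⟩
    simpa using this
  have hU'0 : U' 0 ≠ 0 := by
    have := (hnd' 1).ne_zero ⟨0, by decide⟩
    simpa using this
  -- positivity of norms
  have hs0 : 0 < Real.sqrt (∑ J, U 0 J ^ 2) := by
    apply Real.sqrt_pos.mpr
    obtain ⟨I, hI⟩ : ∃ I, U 0 I ≠ 0 := by
      by_contra h; push_neg at h; exact hU0 (funext h)
    exact Finset.sum_pos' (fun _ _ => sq_nonneg _) ⟨I, Finset.mem_univ _, by positivity⟩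
  have hs0' : 0 < Real.sqrt (∑ J, U' 0 J ^ 2) := by
    apply Real.sqrt_pos.mpr
    obtain ⟨I, hI⟩ : ∃ I, U' 0 I ≠ 0 := by
      by_contra h; push_neg at h; exact hU'0 (funext h)
    exact Finset.sum_pos' (fun _ _ => sq_nonneg _) ⟨I, Finset.mem_univ _, by positivity⟩
  set c : ℝ := et * Real.sqrt (∑ J, U' 0 J ^ 2) / Real.sqrt (∑ J, U 0 J ^ 2) with hcdef
  have hcne : c ≠ 0 := div_ne_zero (mul_ne_zero hetne (ne_of_gt hs0')) (ne_of_gt hs0)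
  have hc : ∀ I, U' 0 I = c * U 0 I := by
    intro I
    have h := hmatch I
    rw [hcdef]
    field_simp at h ⊢
    linarith [h]
  obtain ⟨I₀, hI₀⟩ : ∃ I, U 0 I ≠ 0 := by
    by_contra h; push_neg at h; exact hU0 (funext h)
  set κ : ℝ := e' * V' * c with hκdef
  have hκne : κ ≠ 0 := mul_ne_zero (mul_ne_zero he'ne hV'ne) hcne
  set t : Fin 5 → ℝ := fun i => (e * V * U i I₀ - κ * U' i I₀) / U 0 I₀ with htdef
  have hw : ∀ i : Fin 5, i ≠ 0 → ∀ J, e * V * U i J - κ * U' i J = t i * U 0 J := by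
    intro i hi J
    have h := hbiv i hi I₀ J
    rw [hc I₀, hc J] at h
    have h2 : U 0 I₀ * (e * V * U i J - κ * U' i J)
        = U 0 J * (e * V * U i I₀ - κ * U' i I₀) := by
      rw [hκdef]; linear_combination h
    rw [htdef]
    simp only
    rw [div_mul_eq_mul_div, eq_div_iff hI₀]
    linear_combination h2
  set l : ℝ := e * V / κ with hldef
  have hlne : l ≠ 0 := div_ne_zero (mul_ne_zero hene hVne) hκne
  set μ : Fin 5 → ℝ := fun i => -(t i) / κ with hμdef
  have hsub : ∀ i : Fin 5, i ≠ 0 → ∀ J, U' i J = l * U i J + μ i * U 0 J := by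
    intro i hi J
    have h := hw i hi J
    rw [hldef, hμdef]
    simp only
    field_simp
    linear_combination -h
  -- closure component identities
  have hcl : ∀ I, U 0 I = -(U 1 I + U 2 I + U 3 I + U 4 I) := by
    intro I
    have h : (∑ i, U i) I = (0 : Fin 4 → ℝ) I := by rw [hclose]
    simp only [Finset.sum_apply, Fin.sum_univ_five, Pi.zero_apply] at h
    linarith
  have hcl' : ∀ I, U' 0 I = -(U' 1 I + U' 2 I + U' 3 I + U' 4 I) := by
    intro I
    have h : (∑ i, U' i) I = (0 : Fin 4 → ℝ) I := by rw [hclose']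
    simp only [Finset.sum_apply, Fin.sum_univ_five, Pi.zero_apply] at h
    linarith
  set S : ℝ := μ 1 + μ 2 + μ 3 + μ 4 with hSdef
  have hcS : c = l - S := by
    have h1 := hcl' I₀
    rw [hc I₀, hsub 1 (by decide) I₀, hsub 2 (by decide) I₀, hsub 3 (by decide) I₀,
      hsub 4 (by decide) I₀] at h1
    have h2 := hcl I₀
    have h3 : (c - (l - S)) * U 0 I₀ = 0 := by rw [hSdef]; linear_combination h1 - l * h2
    have := mul_eq_zero.mp h3
    rcases this with h | h
    · linarith
    · exact absurd h hI₀
  -- determinant identity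
  have hfun : ∀ i : Fin 5, i ≠ 0 →
      U' i = fun I => l * U i I + μ i * (-(U 1 I + U 2 I + U 3 I + U 4 I)) := by
    intro i hi
    funext I
    rw [hsub i hi I, ← hcl I]
  have hdet : V'⁻¹ = l ^ 3 * (l - S) * V⁻¹ := by
    rw [hV', hfun 1 (by decide), hfun 2 (by decide), hfun 3 (by decide), hfun 4 (by decide),
      detlem, hV, hSdef]
  -- l * κ = e * V
  have hlκ : l * κ = e * V := by
    rw [hldef]; field_simp
  have hκc : κ = e' * V' * c := hκdef
  clear_value S μ l t κ c
  -- derive l^2 = e * e'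
  have he2 : e * e = 1 := by rcases he with h | h <;> rw [h] <;> norm_num
  have he'2 : e' * e' = 1 := by rcases he' with h | h <;> rw [h] <;> norm_num
  have hsq : l ^ 2 = e * e' := by
    have h1 : V'⁻¹ = l ^ 3 * c * V⁻¹ := by rw [hdet, hcS]
    have h2 : l * (e' * V' * c) = e * V := by rw [← hκc]; exact hlκ
    have hc2 : c = e * V / (l * e' * V') := by
      field_simp
      linear_combination h2
    rw [hc2] at h1
    field_simp at h1
    have h3 : l * e' * (V * V') = l ^ 3 * e * (V * V') := by linear_combination (l * V * V') * h1
    have h4 : l * e' = l ^ 3 * e := mul_right_cancel₀ (mul_ne_zero hVne hV'ne) h3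
    have h5 : e' = l ^ 2 * e := mul_left_cancel₀ hlne (by linear_combination h4)
    rw [h5]
    linear_combination (-(l ^ 2)) * he2
  have hee' : e = e' := by
    rcases he with h | h <;> rcases he' with h' | h' <;> rw [h, h'] at hsq ⊢ <;>
      first
      | rfl
      | (exfalso; nlinarith [sq_nonneg l, hsq])
  have hl2 : l ^ 2 = 1 := by rw [hsq, hee']; rcases he' with h | h <;> rw [h] <;> norm_num
  have hlpm : l = 1 ∨ l = -1 := by
    rcases mul_self_eq_one_iff.mp (by linear_combination hl2 : l * l = 1) with h | h
    · exact Or.inl h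
    · exact Or.inr h
  -- V = l * V' * c
  have hVc : V = l * V' * c := by
    have h2 : l * (e' * V' * c) = e * V := by rw [← hκc]; exact hlκ
    rw [hee'] at h2
    linear_combination (-e') * h2 - (V - l * V' * c) * he'2
  refine ⟨hee', l, hlpm, ?_, ?_⟩
  · intro I
    rw [hc I, hVc]; ring
  · refine ⟨fun i => if i = 0 then 0 else μ i, ?_, ?_⟩
    · intro i hi
      funext I
      simp only [Pi.add_apply, Pi.smul_apply, smul_eq_mul, if_neg hi]
      exact hsub i hi I
    · rw [show (Finset.univ \ {(0 : Fin 5)} : Finset (Fin 5)) = {1, 2, 3, 4} from by decide]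
      have hsum : ∑ i ∈ ({1, 2, 3, 4} : Finset (Fin 5)), (if i = 0 then 0 else μ i)
          = μ 1 + μ 2 + μ 3 + μ 4 := by
        rw [Finset.sum_insert (by decide), Finset.sum_insert (by decide),
          Finset.sum_insert (by decide), Finset.sum_singleton]
        rw [if_neg (by decide : ¬((1 : Fin 5) = 0)), if_neg (by decide : ¬((2 : Fin 5) = 0)),
          if_neg (by decide : ¬((3 : Fin 5) = 0)), if_neg (by decide : ¬((4 : Fin 5) = 0))]
        ring
      rw [hsum]
      have hcv : c = l * V / V' := by
        rw [eq_div_iff hV'ne]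
        linear_combination (-(c * V')) * hl2 - l * hVc
      have hS2 : μ 1 + μ 2 + μ 3 + μ 4 = l - c := by rw [← hSdef]; linarith [hcS]
      rw [hS2, hcv]
      ring
end

section
/- Under the hypotheses of the gluing lemma (two closed nondegenerate tetrads U_i, U'_i in ℝ⁴ matched along U_0 with identical bivectors εV U_0∧U_i = ε'V' U'_0∧U'_i), the corresponding co-tetrad vectors of the shared tetrahedron agree up to the sign α: E'_{jk} = α E_{jk} for all j,k ∈ {1,…,4}, where E_{jk} = (V/3!) ε_{jk}^{i₁i₂i₃} ⋆(U_{i₁}∧U_{i₂}∧U_{i₃}) and similarly for E'. -/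
open Matrix Complex Finset

/- Auxiliary machinery -/

def z4 (i j k l : Fin 4) : ℤ :=
  ∏ p ∈ Finset.univ.filter (fun p : Fin 4 × Fin 4 => p.1 < p.2),
    ((((![i,j,k,l]) p.2 : ℕ) : ℤ) - (((![i,j,k,l]) p.1 : ℕ) : ℤ)).sign

def z5 (i j k l m : Fin 5) : ℤ :=
  ∏ p ∈ Finset.univ.filter (fun p : Fin 5 × Fin 5 => p.1 < p.2),
    ((((![i,j,k,l,m]) p.2 : ℕ) : ℤ) - (((![i,j,k,l,m]) p.1 : ℕ) : ℤ)).sign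

lemma eps4_cast (i j k l : Fin 4) : eps4 i j k l = ((z4 i j k l : ℤ) : ℝ) := by
  unfold eps4 levi z4; rw [Int.cast_prod]

lemma eps5_cast (i j k l m : Fin 5) : eps5 i j k l m = ((z5 i j k l m : ℤ) : ℝ) := by
  unfold eps5 levi z5; rw [Int.cast_prod]

set_option maxHeartbeats 4000000 in
lemma z4_swapJK : ∀ I J K L : Fin 4, z4 I K J L = - z4 I J K L := by decide
set_option maxHeartbeats 4000000 in
lemma z4_swapKL : ∀ I J K L : Fin 4, z4 I J L K = - z4 I J K L := by decide
set_option maxHeartbeats 4000000 in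
lemma z4_swapJL : ∀ I J K L : Fin 4, z4 I L K J = - z4 I J K L := by decide

set_option maxHeartbeats 20000000 in
lemma z5_cases : ∀ j k i1 i2 i3 : Fin 5, z5 j k i1 i2 i3 = 0 ∨
    ((i1 = 0 ∧ i2 ≠ 0 ∧ i3 ≠ 0) ∨ (i2 = 0 ∧ i1 ≠ 0 ∧ i3 ≠ 0) ∨ (i3 = 0 ∧ i1 ≠ 0 ∧ i2 ≠ 0)
     ∨ j = 0 ∨ k = 0) := by decide

lemma eps4_swapJK (I J K L : Fin 4) : eps4 I K J L = - eps4 I J K L := by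
  rw [eps4_cast, eps4_cast, z4_swapJK]; push_cast; ring
lemma eps4_swapKL (I J K L : Fin 4) : eps4 I J L K = - eps4 I J K L := by
  rw [eps4_cast, eps4_cast, z4_swapKL]; push_cast; ring
lemma eps4_swapJL (I J K L : Fin 4) : eps4 I L K J = - eps4 I J K L := by
  rw [eps4_cast, eps4_cast, z4_swapJL]; push_cast; ring

lemma sum3_swap13 {M : Type*} [AddCommMonoid M] (g : Fin 4 → Fin 4 → Fin 4 → M) :
    ∑ J, ∑ K, ∑ L, g J K L = ∑ L, ∑ K, ∑ J, g J K L := by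
  calc ∑ J, ∑ K, ∑ L, g J K L
      = ∑ J, ∑ L, ∑ K, g J K L := Finset.sum_congr rfl fun J _ => Finset.sum_comm
    _ = ∑ L, ∑ J, ∑ K, g J K L := Finset.sum_comm
    _ = ∑ L, ∑ K, ∑ J, g J K L := Finset.sum_congr rfl fun L _ => Finset.sum_comm

lemma tstar_swap12 (a b c : Fin 4 → ℝ) (I : Fin 4) : tstar b a c I = - tstar a b c I := by
  have h1 : tstar b a c I = ∑ J, ∑ K, ∑ L, eps4 I K J L * b K * a J * c L := by
    unfold tstar; exact Finset.sum_comm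
  have h2 : (∑ J, ∑ K, ∑ L, eps4 I K J L * b K * a J * c L)
      = ∑ J, ∑ K, ∑ L, -(eps4 I J K L * a J * b K * c L) := by
    refine Finset.sum_congr rfl fun J _ => Finset.sum_congr rfl fun K _ =>
      Finset.sum_congr rfl fun L _ => ?_
    rw [eps4_swapJK]; ring
  have h3 : (∑ J, ∑ K, ∑ L, -(eps4 I J K L * a J * b K * c L)) = - tstar a b c I := by
    unfold tstar; simp [Finset.sum_neg_distrib]
  exact (h1.trans h2).trans h3

lemma tstar_swap13 (a b c : Fin 4 → ℝ) (I : Fin 4) : tstar c b a I = - tstar a b c I := by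
  have h1 : tstar c b a I = ∑ J, ∑ K, ∑ L, eps4 I L K J * c L * b K * a J := by
    unfold tstar; exact sum3_swap13 _
  have h2 : (∑ J, ∑ K, ∑ L, eps4 I L K J * c L * b K * a J)
      = ∑ J, ∑ K, ∑ L, -(eps4 I J K L * a J * b K * c L) := by
    refine Finset.sum_congr rfl fun J _ => Finset.sum_congr rfl fun K _ =>
      Finset.sum_congr rfl fun L _ => ?_
    rw [eps4_swapJL]; ring
  have h3 : (∑ J, ∑ K, ∑ L, -(eps4 I J K L * a J * b K * c L)) = - tstar a b c I := by
    unfold tstar; simp [Finset.sum_neg_distrib]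
  exact (h1.trans h2).trans h3

lemma tstar_swap23 (a b c : Fin 4 → ℝ) (I : Fin 4) : tstar a c b I = - tstar a b c I := by
  have h1 : tstar a c b I = ∑ J, ∑ K, ∑ L, eps4 I J L K * a J * c L * b K := by
    unfold tstar; exact Finset.sum_congr rfl fun J _ => Finset.sum_comm
  have h2 : (∑ J, ∑ K, ∑ L, eps4 I J L K * a J * c L * b K)
      = ∑ J, ∑ K, ∑ L, -(eps4 I J K L * a J * b K * c L) := by
    refine Finset.sum_congr rfl fun J _ => Finset.sum_congr rfl fun K _ =>
      Finset.sum_congr rfl fun L _ => ?_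
    rw [eps4_swapKL]; ring
  have h3 : (∑ J, ∑ K, ∑ L, -(eps4 I J K L * a J * b K * c L)) = - tstar a b c I := by
    unfold tstar; simp [Finset.sum_neg_distrib]
  exact (h1.trans h2).trans h3

lemma tstar_eq12 (u c : Fin 4 → ℝ) (I : Fin 4) : tstar u u c I = 0 := by
  have := tstar_swap12 u u c I; linarith

lemma tstar_eq13 (u b : Fin 4 → ℝ) (I : Fin 4) : tstar u b u I = 0 := by
  have := tstar_swap13 u b u I; linarith

lemma tstar_eq23 (a u : Fin 4 → ℝ) (I : Fin 4) : tstar a u u I = 0 := by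
  have := tstar_swap23 a u u I; linarith

lemma tstar_smul1 (t : ℝ) (a b c : Fin 4 → ℝ) (I : Fin 4) :
    tstar (fun J => t * a J) b c I = t * tstar a b c I := by
  unfold tstar
  simp only [Finset.mul_sum]
  exact Finset.sum_congr rfl fun J _ => Finset.sum_congr rfl fun K _ =>
    Finset.sum_congr rfl fun L _ => by ring

lemma tstar_expand2 (x s : ℝ) (a u v w : Fin 4 → ℝ) (I : Fin 4) :
    tstar a (fun J => x * u J + s * v J) w I
      = x * tstar a u w I + s * tstar a v w I := by
  unfold tstar
  simp only [Finset.mul_sum, ← Finset.sum_add_distrib]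
  exact Finset.sum_congr rfl fun J _ => Finset.sum_congr rfl fun K _ =>
    Finset.sum_congr rfl fun L _ => by ring

lemma tstar_expand3 (x s : ℝ) (a b u v : Fin 4 → ℝ) (I : Fin 4) :
    tstar a b (fun J => x * u J + s * v J) I
      = x * tstar a b u I + s * tstar a b v I := by
  unfold tstar
  simp only [Finset.mul_sum, ← Finset.sum_add_distrib]
  exact Finset.sum_congr rfl fun J _ => Finset.sum_congr rfl fun K _ =>
    Finset.sum_congr rfl fun L _ => by ring

/-- under the gluing-lemma relations the co-tetrad vectors of the shared
tetrahedron agree up to the sign α: E'_{jk} = α E_{jk}. -/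
theorem stmt18 (U U' : Fin 5 → Fin 4 → ℝ)
    (hclose : ∑ i, U i = 0) (hclose' : ∑ i, U' i = 0)
    (hnd : ∀ i : Fin 5, LinearIndependent ℝ (fun j : {j : Fin 5 // j ≠ i} => U j.1))
    (hnd' : ∀ i : Fin 5, LinearIndependent ℝ (fun j : {j : Fin 5 // j ≠ i} => U' j.1))
    (V V' α : ℝ) (hα : α = 1 ∨ α = -1)
    (hV : V⁻¹ = det4 (U 1) (U 2) (U 3) (U 4)) (hVne : V ≠ 0)
    (hV' : V'⁻¹ = det4 (U' 1) (U' 2) (U' 3) (U' 4)) (hV'ne : V' ≠ 0)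
    (hU0 : ∀ I, V * U 0 I = α * (V' * U' 0 I))
    (a : Fin 5 → ℝ)
    (hrel : ∀ i, i ≠ (0 : Fin 5) → U' i = α • U i + a i • U 0)
    (hsum : (∑ i ∈ Finset.univ \ {(0 : Fin 5)}, a i) = α * (1 - V / V')) :
    ∀ j k : Fin 5, j ≠ 0 → k ≠ 0 → ∀ I,
      (V' / 6) * (∑ i1, ∑ i2, ∑ i3, eps5 j k i1 i2 i3 * tstar (U' i1) (U' i2) (U' i3) I) =
        α * ((V / 6) * (∑ i1, ∑ i2, ∑ i3, eps5 j k i1 i2 i3 * tstar (U i1) (U i2) (U i3) I)) := by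
  have hα2 : α * α = 1 := by rcases hα with h | h <;> rw [h] <;> norm_num
  have h0 : ∀ J, V' * U' 0 J = α * V * U 0 J := fun J => by
    linear_combination (-α) * hU0 J + (-(V' * U' 0 J)) * hα2
  have hrw : ∀ i, i ≠ (0 : Fin 5) → U' i = fun J => α * U i J + a i * U 0 J := by
    intro i hi
    rw [hrel i hi]
    funext J
    simp [Pi.add_apply, Pi.smul_apply, smul_eq_mul]
  have key1 : ∀ p q : Fin 5, p ≠ 0 → q ≠ 0 → ∀ I,
      V' * tstar (U' 0) (U' p) (U' q) I = α * V * tstar (U 0) (U p) (U q) I := by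
    intro p q hp hq I
    have e0 : (fun J => V' * U' 0 J) = (fun J => (α * V) * U 0 J) :=
      funext fun J => h0 J
    calc V' * tstar (U' 0) (U' p) (U' q) I
        = tstar (fun J => V' * U' 0 J) (U' p) (U' q) I := (tstar_smul1 _ _ _ _ _).symm
      _ = tstar (fun J => (α * V) * U 0 J) (U' p) (U' q) I := by rw [e0]
      _ = (α * V) * tstar (U 0) (U' p) (U' q) I := tstar_smul1 _ _ _ _ _
      _ = α * V * tstar (U 0) (U p) (U q) I := by
          rw [hrw p hp, hrw q hq, tstar_expand2, tstar_expand3, tstar_expand3,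
            tstar_eq12, tstar_eq13, tstar_eq12]
          linear_combination (α * V * tstar (U 0) (U p) (U q) I) * hα2
  have key2 : ∀ p q : Fin 5, p ≠ 0 → q ≠ 0 → ∀ I,
      V' * tstar (U' p) (U' 0) (U' q) I = α * V * tstar (U p) (U 0) (U q) I := by
    intro p q hp hq I
    rw [tstar_swap12 (U' 0) (U' p) (U' q) I, tstar_swap12 (U 0) (U p) (U q) I]
    linear_combination -(key1 p q hp hq I)
  have key3 : ∀ p q : Fin 5, p ≠ 0 → q ≠ 0 → ∀ I,
      V' * tstar (U' p) (U' q) (U' 0) I = α * V * tstar (U p) (U q) (U 0) I := by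
    intro p q hp hq I
    rw [tstar_swap13 (U' 0) (U' q) (U' p) I, tstar_swap13 (U 0) (U q) (U p) I]
    linear_combination -(key1 q p hq hp I)
  intro j k hj hk I
  have H : ∀ i1 i2 i3 : Fin 5,
      V' * (eps5 j k i1 i2 i3 * tstar (U' i1) (U' i2) (U' i3) I)
        = α * V * (eps5 j k i1 i2 i3 * tstar (U i1) (U i2) (U i3) I) := by
    intro i1 i2 i3
    rcases z5_cases j k i1 i2 i3 with h | h
    · have hz : eps5 j k i1 i2 i3 = 0 := by rw [eps5_cast, h]; norm_num
      rw [hz]; ring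
    · rcases h with ⟨h1, h2, h3⟩ | ⟨h1, h2, h3⟩ | ⟨h1, h2, h3⟩ | h | h
      · subst h1
        linear_combination (eps5 j k 0 i2 i3) * key1 i2 i3 h2 h3 I
      · subst h1
        linear_combination (eps5 j k i1 0 i3) * key2 i1 i3 h2 h3 I
      · subst h1
        linear_combination (eps5 j k i1 i2 0) * key3 i1 i2 h2 h3 I
      · exact absurd h hj
      · exact absurd h hk
  have e1 : V' * (∑ i1, ∑ i2, ∑ i3, eps5 j k i1 i2 i3 * tstar (U' i1) (U' i2) (U' i3) I)
      = α * V * (∑ i1, ∑ i2, ∑ i3, eps5 j k i1 i2 i3 * tstar (U i1) (U i2) (U i3) I) := by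
    simp only [Finset.mul_sum]
    exact Finset.sum_congr rfl fun i1 _ => Finset.sum_congr rfl fun i2 _ =>
      Finset.sum_congr rfl fun i3 _ => H i1 i2 i3
  linear_combination e1 / 6
end

section
/- Regge form of the on-shell action: suppose for each wedge (e,f) of a face f with n wedges the SU(2)×SU(2) wedge holonomy satisfies G^±_{ef} = exp(½ i(θ_{ef} ± θ̃_{ef}) X̂^±) for fixed unit su(2) elements X̂^± and real angles with ∑_{e⊂f} θ_{ef} = εΘ_f, ∑_{e⊂f} θ̃_{ef} = π∑_{e⊂f} n_e (n_e ∈ ℤ). Then for positive integers γ⁺ and nonzero integers γ⁻ and spin j_f, the sum S_f = 2|γ⁺|j_f ∑_e ln tr[½(1 + sgn(γ⁺)X̂⁺)G⁺_{ef}] + 2|γ⁻|j_f ∑_e ln tr[½(1 + sgn(γ⁻)X̂⁻)G⁻_{ef}] equals iε(γ⁺+γ⁻)j_fΘ_f + iπ(γ⁺−γ⁻)j_f ∑_{e⊂f} n_e; in particular exp(S_f) = exp(iε(γ⁺+γ⁻)j_fΘ_f)·∏_e ε_e^{(γ⁺−γ⁻)j_f} with ε_e = (−1)^{n_e}. -/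
open Matrix Complex Finset

lemma trace_key (x : Fin 3 → ℝ) (hx : ∑ i, x i ^ 2 = 1) (s : ℝ) (φ : ℝ) :
    Matrix.trace (((1:ℝ)/2 : ℂ) • ((1 : Matrix (Fin 2) (Fin 2) ℂ) + ((s:ℝ):ℂ) • su2vec x) *
      ((Real.cos (φ/2) : ℂ) • (1 : Matrix (Fin 2) (Fin 2) ℂ) +
        (Complex.I * (Real.sin (φ/2):ℂ)) • su2vec x)) =
    (Real.cos (φ/2) : ℂ) + Complex.I * (s:ℂ) * (Real.sin (φ/2) : ℂ) := by
  have hx3 : x 0 ^ 2 + x 1 ^ 2 + x 2 ^ 2 = 1 := by rw [Fin.sum_univ_three] at hx; exact hx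
  have hx' : ((x 0 : ℂ))^2 + (x 1 : ℂ)^2 + (x 2 : ℂ)^2 = 1 := by exact_mod_cast hx3
  simp only [Matrix.trace, Matrix.diag, Matrix.mul_apply, su2vec, σ, Fin.sum_univ_three,
    Fin.sum_univ_two, Matrix.add_apply, Matrix.smul_apply, Matrix.one_apply,
    Matrix.sum_apply, Matrix.cons_val', Matrix.cons_val_zero, Matrix.cons_val_one,
    Matrix.head_cons, Matrix.head_fin_const, Matrix.empty_val', Matrix.cons_val_fin_one,
    Matrix.of_apply, smul_eq_mul, Fin.isValue, if_true, if_false, one_ne_zero, zero_ne_one,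
    ite_true, ite_false, reduceIte]
  push_cast
  linear_combination (Complex.I * Complex.sin ((φ:ℂ)/2) * (s:ℂ)) * hx' +
    (-(s:ℂ) * Complex.I * Complex.sin ((φ:ℂ)/2) * ((x 1:ℂ))^2) * Complex.I_sq

lemma trace_key' (x : Fin 3 → ℝ) (hx : ∑ i, x i ^ 2 = 1) (s : ℝ) (hs : s = 1 ∨ s = -1) (φ : ℝ) :
    Matrix.trace (((1:ℝ)/2 : ℂ) • ((1 : Matrix (Fin 2) (Fin 2) ℂ) + ((s:ℝ):ℂ) • su2vec x) *
      ((Real.cos (φ/2) : ℂ) • (1 : Matrix (Fin 2) (Fin 2) ℂ) +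
        (Complex.I * (Real.sin (φ/2):ℂ)) • su2vec x)) =
    Complex.exp (Complex.I * (s:ℂ) * (φ:ℂ) / 2) := by
  rw [trace_key x hx s φ]
  have h1 : Complex.I * (s:ℂ) * (φ:ℂ) / 2 = ((s * (φ/2) : ℝ) : ℂ) * Complex.I := by
    push_cast; ring
  rw [h1, Complex.exp_mul_I, ← Complex.ofReal_cos, ← Complex.ofReal_sin]
  rcases hs with h | h <;>
    simp [h, Real.cos_neg, Real.sin_neg] <;> push_cast <;> ring

lemma exp_nat_mul_sum_log {n : ℕ} (k : ℕ) (w : Fin n → ℂ) :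
    Complex.exp ((k:ℂ) * ∑ e, Complex.log (Complex.exp (w e))) =
      Complex.exp ((k:ℂ) * ∑ e, w e) := by
  rw [Complex.exp_nat_mul, Complex.exp_nat_mul, Complex.exp_sum, Complex.exp_sum]
  congr 1
  exact Finset.prod_congr rfl fun e _ => by rw [Complex.exp_log (Complex.exp_ne_zero _)]

/-- Regge form of the on-shell wedge action: the exponentiated action equals
exp(iε(γ⁺+γ⁻)j Θ + iπ(γ⁺−γ⁻)j ∑ nₑ) = exp(iε(γ⁺+γ⁻)j Θ)·∏ₑ εₑ^{(γ⁺−γ⁻)j}. -/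
theorem stmt19 (n : ℕ) (θ θt : Fin n → ℝ) (ne : Fin n → ℤ) (Θ : ℝ)
    (ε : ℝ) (hε : ε = 1 ∨ ε = -1)
    (γp γm : ℤ) (hγp : 0 < γp) (hγm : γm ≠ 0)
    (j : ℝ) (hj : ∃ m : ℕ, j = (m : ℝ) / 2)
    (xp xm : Fin 3 → ℝ) (hxp : ∑ i, xp i ^ 2 = 1) (hxm : ∑ i, xm i ^ 2 = 1)
    (hθ : ∑ e, θ e = ε * Θ)
    (hθt : ∑ e, θt e = Real.pi * ∑ e, (ne e : ℝ))
    (Gp Gm : Fin n → Matrix (Fin 2) (Fin 2) ℂ)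
    (hGp : ∀ e, Gp e = (Real.cos ((θ e + θt e) / 2) : ℂ) • (1 : Matrix (Fin 2) (Fin 2) ℂ) +
      (Complex.I * (Real.sin ((θ e + θt e) / 2) : ℂ)) • su2vec xp)
    (hGm : ∀ e, Gm e = (Real.cos ((θ e - θt e) / 2) : ℂ) • (1 : Matrix (Fin 2) (Fin 2) ℂ) +
      (Complex.I * (Real.sin ((θ e - θt e) / 2) : ℂ)) • su2vec xm)
    (S : ℂ)
    (hS : S = ((2 * |(γp : ℝ)| * j : ℝ) : ℂ) *
          ∑ e, Complex.log (Matrix.trace (((1 : ℝ) / 2 : ℂ) •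
            ((1 : Matrix (Fin 2) (Fin 2) ℂ) + ((γp.sign : ℝ) : ℂ) • su2vec xp) * Gp e)) +
        ((2 * |(γm : ℝ)| * j : ℝ) : ℂ) *
          ∑ e, Complex.log (Matrix.trace (((1 : ℝ) / 2 : ℂ) •
            ((1 : Matrix (Fin 2) (Fin 2) ℂ) + ((γm.sign : ℝ) : ℂ) • su2vec xm) * Gm e))) :
    Complex.exp S =
        Complex.exp (Complex.I * (ε : ℂ) * (((γp : ℝ) + (γm : ℝ) : ℝ) : ℂ) * (j : ℂ) * (Θ : ℂ) +
          Complex.I * (Real.pi : ℂ) * (((γp : ℝ) - (γm : ℝ) : ℝ) : ℂ) * (j : ℂ) *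
            (∑ e, ((ne e : ℝ) : ℂ))) ∧
      Complex.exp S =
        Complex.exp (Complex.I * (ε : ℂ) * (((γp : ℝ) + (γm : ℝ) : ℝ) : ℂ) * (j : ℂ) * (Θ : ℂ)) *
          ∏ e, Complex.exp (Complex.I * (Real.pi : ℂ) * ((ne e : ℝ) : ℂ) *
            (((γp : ℝ) - (γm : ℝ) : ℝ) : ℂ) * (j : ℂ)) := by
  obtain ⟨m, hm⟩ := hj
  -- sign facts
  have hsp : ((γp.sign : ℝ)) = 1 := by
    rw [Int.sign_eq_one_of_pos hγp]; norm_num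
  have hsm : ((γm.sign : ℝ)) = 1 ∨ ((γm.sign : ℝ)) = -1 := by
    rcases lt_or_gt_of_ne hγm with h | h
    · right; rw [Int.sign_eq_neg_one_of_neg h]; norm_num
    · left; rw [Int.sign_eq_one_of_pos h]; norm_num
  -- coefficients as naturals
  have hcp : ((2 * |(γp : ℝ)| * j : ℝ) : ℂ) = ((γp.natAbs * m : ℕ) : ℂ) := by
    have h1 : ((γp.natAbs : ℕ) : ℝ) = |(γp : ℝ)| := by
      rw [Nat.cast_natAbs, Int.cast_abs]
    push_cast [← h1, hm]
    ring
  have hcm : ((2 * |(γm : ℝ)| * j : ℝ) : ℂ) = ((γm.natAbs * m : ℕ) : ℂ) := by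
    have h1 : ((γm.natAbs : ℕ) : ℝ) = |(γm : ℝ)| := by
      rw [Nat.cast_natAbs, Int.cast_abs]
    push_cast [← h1, hm]
    ring
  -- trace rewrites
  have e1 : ∀ e : Fin n, Matrix.trace (((1 : ℝ) / 2 : ℂ) •
      ((1 : Matrix (Fin 2) (Fin 2) ℂ) + ((γp.sign : ℝ) : ℂ) • su2vec xp) * Gp e) =
      Complex.exp (Complex.I * ((γp.sign : ℝ):ℂ) * ((θ e + θt e : ℝ):ℂ) / 2) := by
    intro e; rw [hGp e]
    exact trace_key' xp hxp _ (Or.inl hsp) _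
  have e2 : ∀ e : Fin n, Matrix.trace (((1 : ℝ) / 2 : ℂ) •
      ((1 : Matrix (Fin 2) (Fin 2) ℂ) + ((γm.sign : ℝ) : ℂ) • su2vec xm) * Gm e) =
      Complex.exp (Complex.I * ((γm.sign : ℝ):ℂ) * ((θ e - θt e : ℝ):ℂ) / 2) := by
    intro e; rw [hGm e]
    exact trace_key' xm hxm _ hsm _
  -- compute exp S
  have hsum : ∀ (s : ℝ) (f : Fin n → ℝ),
      ∑ e, Complex.I * (s:ℂ) * ((f e : ℝ):ℂ) / 2 = Complex.I * (s:ℂ) * ((∑ e, f e : ℝ):ℂ) / 2 := by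
    intro s f
    push_cast
    rw [Finset.mul_sum, Finset.sum_div]
  have hES : Complex.exp S =
      Complex.exp (((γp.natAbs * m : ℕ) : ℂ) * (Complex.I * ((γp.sign : ℝ):ℂ) * ((∑ e, (θ e + θt e) : ℝ):ℂ) / 2) +
        ((γm.natAbs * m : ℕ) : ℂ) * (Complex.I * ((γm.sign : ℝ):ℂ) * ((∑ e, (θ e - θt e) : ℝ):ℂ) / 2)) := by
    rw [hS, Complex.exp_add, Complex.exp_add]
    congr 1
    · simp only [e1, hcp]
      rw [exp_nat_mul_sum_log, hsum]
    · simp only [e2, hcm]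
      rw [exp_nat_mul_sum_log, hsum]
  -- arithmetic on exponents
  have key : ∀ a : ℤ, ((a.natAbs * m : ℕ) : ℂ) * ((a.sign : ℝ):ℂ) = (a : ℂ) * (m : ℂ) := by
    intro a
    have h : ((a.sign * (a.natAbs : ℤ) : ℤ) : ℂ) = (a : ℂ) := by rw [Int.sign_mul_natAbs]
    have h2 : ((a.natAbs : ℕ) : ℂ) = ((|a| : ℤ) : ℂ) := by
      rw [Int.abs_eq_natAbs a, Int.cast_natCast]
    push_cast at h ⊢
    rw [h2]
    linear_combination (m : ℂ) * h
  have hnp := key γp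
  have hnm := key γm
  have hA : (∑ e, (θ e + θt e)) = ε * Θ + Real.pi * ∑ e, (ne e : ℝ) := by
    rw [Finset.sum_add_distrib, hθ, hθt]
  have hB : (∑ e, (θ e - θt e)) = ε * Θ - Real.pi * ∑ e, (ne e : ℝ) := by
    rw [Finset.sum_sub_distrib, hθ, hθt]
  have hN : (∑ e, ((ne e : ℝ) : ℂ)) = ((∑ e, (ne e : ℝ) : ℝ) : ℂ) := by
    push_cast; rfl
  have main : Complex.exp S =
      Complex.exp (Complex.I * (ε : ℂ) * (((γp : ℝ) + (γm : ℝ) : ℝ) : ℂ) * (j : ℂ) * (Θ : ℂ) +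
        Complex.I * (Real.pi : ℂ) * (((γp : ℝ) - (γm : ℝ) : ℝ) : ℂ) * (j : ℂ) *
          (∑ e, ((ne e : ℝ) : ℂ))) := by
    rw [hES]
    congr 1
    rw [hA, hB, hN]
    have h1 := hnp
    have h2 := hnm
    push_cast [hm] at h1 h2 ⊢
    linear_combination (Complex.I * ((ε:ℂ) * Θ + Real.pi * ∑ e, ((ne e:ℤ):ℂ)) / 2) * h1 +
      (Complex.I * ((ε:ℂ) * Θ - Real.pi * ∑ e, ((ne e:ℤ):ℂ)) / 2) * h2
  refine ⟨main, ?_⟩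
  rw [main, ← Complex.exp_sum, ← Complex.exp_add]
  congr 1
  rw [Finset.mul_sum]
  congr 1
  exact Finset.sum_congr rfl fun e _ => by ring
end
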